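/- Let A be a full specification of a region 𝒜 and let ℬ ⊆ 𝒜 be a region. Let B = Γ_ℬ(A) be the restriction of A to ℬ. Then for every event X with dom(X) ⊆ ℬ, either B ⊆ X or B ⊆ Xᶜ. -/
import Mathlib


open Set MeasureTheory

/-- A full specification of a region `R ⊆ 𝕊`: a nonempty event `F` with `dom F ⊆ R`
that decides every event decidable within `R`. -/
def IsFullSpec {Ω S : Type*} [MeasurableSpace Ω] (dom : Set Ω → Set S)
    (R : Set S) (F : Set Ω) : Prop :=
  MeasurableSet F ∧ F.Nonempty ∧ dom F ⊆ R ∧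
    ∀ X : Set Ω, MeasurableSet X → dom X ⊆ R → F ⊆ X ∨ F ⊆ Xᶜ

/-- The restriction `Γ_R(A)` of an event `A` to a region `R`: the intersection of all
events `Z` with `A ⊆ Z` and `dom Z ⊆ R`. -/
def restr {Ω S : Type*} [MeasurableSpace Ω] (dom : Set Ω → Set S)
    (R : Set S) (A : Set Ω) : Set Ω :=
  ⋂₀ {Z : Set Ω | MeasurableSet Z ∧ A ⊆ Z ∧ dom Z ⊆ R}

/-- Lemma 2: if `A` is a full specification of `𝒜` and `ℬ ⊆ 𝒜`, then the restriction
`B = Γ_ℬ(A)` decides every event decidable within `ℬ`: for every event `X` with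
`dom X ⊆ ℬ`, either `B ⊆ X` or `B ⊆ Xᶜ`. -/
theorem stmt5 {Ω S : Type*} [MeasurableSpace Ω] (dom : Set Ω → Set S)
    (prop_iii : ∀ X : Set Ω, MeasurableSet X → dom Xᶜ = dom X)
    (𝒜 ℬ : Set S) (hBA : ℬ ⊆ 𝒜) (A : Set Ω) (hA : IsFullSpec dom 𝒜 A) :
    ∀ X : Set Ω, MeasurableSet X → dom X ⊆ ℬ →
      restr dom ℬ A ⊆ X ∨ restr dom ℬ A ⊆ Xᶜ := by
  intro X hX hdX
  obtain ⟨hAm, hAne, hdA, hdec⟩ := hA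
  rcases hdec X hX (hdX.trans hBA) with h | h
  · exact Or.inl (sInter_subset_of_mem ⟨hX, h, hdX⟩)
  · refine Or.inr (sInter_subset_of_mem ⟨hX.compl, h, ?_⟩)
    rw [prop_iii X hX]; exact hdX
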